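/- For all n ≥ 1 and k ≥ 3, there exists a set W of k^{n-1} + 1 vertices of the Hamming graph H(n,k) such that every vertex of W is adjacent to at most one other vertex of W. -/

import Mathlib

/-- Two vertices of the Hamming graph `H(n,k)` are adjacent iff they differ
in exactly one coordinate. -/
def HAdj {n k : ℕ} (v w : Fin n → ZMod k) : Prop := ∃! i, v i ≠ w i

/-- `X n k s` is the set of vertices whose coordinate sum is `s` in `ZMod k`. -/
def X (n k : ℕ) (s : ZMod k) : Set (Fin n → ZMod k) := {v | ∑ i, v i = s}

/-- `ellN v` is the (0-based) largest index at which `v` is nonzero (0 if `v = 0`). -/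
def ellN {n k : ℕ} (v : Fin n → ZMod k) : ℕ :=
  (Finset.univ.filter (fun i => v i ≠ 0)).sup (fun i : Fin n => (i : ℕ))

/-- `Y n k s t` is the set of nonzero vertices with coordinate sum `s`
whose last nonzero coordinate equals `t`. -/
def Y (n k : ℕ) (s t : ZMod k) : Set (Fin n → ZMod k) :=
  {v | v ≠ 0 ∧ ∑ i, v i = s ∧ ∃ i : Fin n, (i : ℕ) = ellN v ∧ v i = t}

namespace Stmt16

/-- The "target sum" function: a vertex `v` will be in our set iff
`∑ v = sfun (last nonzero coordinate of v)`. -/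
def sfun (k : ℕ) (t : ZMod k) : ZMod k := if t = 2 ∨ t = -1 then 2 else 1

section zmodfacts

variable {k : ℕ}

lemma one_ne (hk : 3 ≤ k) : (1 : ZMod k) ≠ 0 := by
  haveI : Fact (1 < k) := ⟨by omega⟩
  exact one_ne_zero

lemma two_ne (hk : 3 ≤ k) : (2 : ZMod k) ≠ 0 := by
  intro h
  have h2 : ((2 : ℕ) : ZMod k) = 0 := by push_cast; exact h
  rw [ZMod.natCast_eq_zero_iff] at h2
  have := Nat.le_of_dvd (by norm_num) h2
  omega

lemma one_ne_two (hk : 3 ≤ k) : (1 : ZMod k) ≠ 2 := by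
  intro h
  exact one_ne hk (by linear_combination -h)

lemma sfun_vals (r : ZMod k) : sfun k r = 1 ∨ sfun k r = 2 := by
  unfold sfun; split
  · right; rfl
  · left; rfl

lemma sfun_one (hk : 3 ≤ k) : sfun k 1 = 1 := by
  unfold sfun
  rw [if_neg]
  rintro (h | h)
  · exact one_ne_two hk h
  · exact two_ne hk (by linear_combination h)

lemma sfun_two : sfun k 2 = 2 := by
  unfold sfun; rw [if_pos (Or.inl rfl)]

/-- The crucial "image disjointness": for `t ≠ 0`, the value `sfun t - t`
is never a value of `sfun`. -/
lemma sfun_sub_ne (hk : 3 ≤ k) {t : ZMod k} (ht : t ≠ 0) (r : ZMod k) :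
    sfun k r ≠ sfun k t - t := by
  have h1 := one_ne hk
  have h2 := two_ne hk
  by_cases hc : t = 2 ∨ t = -1
  · have hst : sfun k t = 2 := if_pos hc
    rcases sfun_vals (k := k) r with hr | hr <;> rw [hr, hst] <;>
      rcases hc with h | h <;> subst h <;> intro e
    · exact h1 (by linear_combination e)
    · exact h2 (by linear_combination -e)
    · exact h2 (by linear_combination e)
    · exact h1 (by linear_combination -e)
  · have hst : sfun k t = 1 := if_neg hc
    push_neg at hc
    rcases sfun_vals (k := k) r with hr | hr <;> rw [hr, hst] <;> intro e
    · exact ht (by linear_combination e)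
    · exact hc.2 (by linear_combination e)

/-- Fibers of `t ↦ sfun t - t` have at most two elements, and removing a point
leaves at most one. -/
lemma sfun_fiber (hk : 3 ≤ k) {t r₁ r₂ : ZMod k}
    (e₁ : sfun k r₁ - r₁ = sfun k t - t) (e₂ : sfun k r₂ - r₂ = sfun k t - t)
    (h₁ : r₁ ≠ t) (h₂ : r₂ ≠ t) : r₁ = r₂ := by
  set c : ZMod k := sfun k t - t with hc
  have mem : ∀ x : ZMod k, sfun k x - x = c → x = 1 - c ∨ x = 2 - c := by
    intro x hx
    rcases sfun_vals (k := k) x with h | h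
    · left; linear_combination h - hx
    · right; linear_combination h - hx
  have mt : t = 1 - c ∨ t = 2 - c := mem t rfl
  have m1 : r₁ = 1 - c ∨ r₁ = 2 - c := mem r₁ e₁
  have m2 : r₂ = 1 - c ∨ r₂ = 2 - c := mem r₂ e₂
  rcases mt with ht' | ht' <;> rcases m1 with h1' | h1' <;> rcases m2 with h2' | h2' <;>
    first
      | (exact h1'.trans h2'.symm)
      | (exact absurd (h1'.trans ht'.symm) h₁)
      | (exact absurd (h2'.trans ht'.symm) h₂)

end zmodfacts

section ellfacts

variable {n k : ℕ}

lemma ell_le {v : Fin n → ZMod k} {j : Fin n} (hj : v j ≠ 0) : (j : ℕ) ≤ ellN v :=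
  Finset.le_sup (by simp [hj])

lemma ell_zero {v : Fin n → ZMod k} {j : Fin n} (hj : ellN v < (j : ℕ)) : v j = 0 := by
  by_contra h
  exact absurd (ell_le h) (by omega)

lemma ell_spec {v : Fin n → ZMod k} (hv : v ≠ 0) :
    ∃ i : Fin n, (i : ℕ) = ellN v ∧ v i ≠ 0 := by
  have hne : (Finset.univ.filter (fun i => v i ≠ 0)).Nonempty := by
    obtain ⟨i, hi⟩ := Function.ne_iff.mp hv
    exact ⟨i, Finset.mem_filter.mpr ⟨Finset.mem_univ _, by simpa using hi⟩⟩
  obtain ⟨i, hi, hsup⟩ :=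
    Finset.exists_mem_eq_sup (Finset.univ.filter (fun i => v i ≠ 0)) hne
      (fun i : Fin n => (i : ℕ))
  exact ⟨i, hsup.symm, (Finset.mem_filter.mp hi).2⟩

end ellfacts

/-- The predicate defining our dissociation set. -/
def WP (n k : ℕ) (v : Fin n → ZMod k) : Prop :=
  v ≠ 0 ∧ ∃ i : Fin n, (i : ℕ) = ellN v ∧ ∑ j, v j = sfun k (v i)

noncomputable instance (n k : ℕ) : DecidablePred (WP n k) := fun _ => Classical.dec _

section wpfacts

variable {n k : ℕ}

lemma WP_elim {v : Fin n → ZMod k} (h : WP n k v) :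
    v ≠ 0 ∧ ∃ i : Fin n, (i : ℕ) = ellN v ∧ v i ≠ 0 ∧ ∑ j, v j = sfun k (v i) := by
  obtain ⟨hv, i, hi, hs⟩ := h
  obtain ⟨i', hi', hvi'⟩ := ell_spec hv
  have hii : i' = i := Fin.ext (by omega)
  subst hii
  exact ⟨hv, i', hi', hvi', hs⟩

lemma sum_shift {v w : Fin n → ZMod k} {i : Fin n} (h : ∀ j, j ≠ i → v j = w j) :
    ∑ j, w j = ∑ j, v j + (w i - v i) := by
  have h1 : ∑ j, (w j - v j) = w i - v i :=
    Finset.sum_eq_single i (fun j _ hj => by rw [h j hj]; ring)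
      (fun hi => absurd (Finset.mem_univ i) hi)
  have h2 : ∑ j, (w j - v j) = ∑ j, w j - ∑ j, v j := Finset.sum_sub_distrib _ _
  rw [h2] at h1
  linear_combination h1

lemma aux_not (hk : 3 ≤ k) {v w : Fin n → ZMod k}
    {i iv iw : Fin n} (hiv : (iv : ℕ) = ellN v) (hvi : v iv ≠ 0)
    (hsv : ∑ j, v j = sfun k (v iv))
    (hiw : (iw : ℕ) = ellN w) (hwi : w iw ≠ 0) (hsw : ∑ j, w j = sfun k (w iw))
    (agree : ∀ j, j ≠ i → v j = w j) (hii : i = iv) : i = iw := by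
  subst hii
  by_contra hne
  have h1 : v iw = w iw := agree iw (fun h => hne h.symm)
  have h2 : (iw : ℕ) ≤ ellN v := ell_le (h1 ▸ hwi)
  have h3 : ellN w ≠ ellN v := by
    intro h
    exact hne (Fin.ext (by omega))
  have h4 : ellN w < (i : ℕ) := by omega
  have h5 : w i = 0 := ell_zero h4
  have h6 : ∑ j, w j = ∑ j, v j + (w i - v i) := sum_shift agree
  have h7 : ∑ j, w j = sfun k (v i) - v i := by
    rw [h6, hsv, h5]; ring
  exact sfun_sub_ne hk hvi (w iw) (by rw [← hsw, h7])

lemma key (hk : 3 ≤ k) {v w : Fin n → ZMod k} (hv : WP n k v) (hw : WP n k w)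
    (hadj : HAdj v w) :
    ∃ i : Fin n, (i : ℕ) = ellN v ∧ (∀ j, j ≠ i → v j = w j) ∧ v i ≠ 0 ∧ w i ≠ 0 ∧
      w i ≠ v i ∧ sfun k (w i) - w i = sfun k (v i) - v i := by
  obtain ⟨hv0, iv, hiv, hvi, hsv⟩ := WP_elim hv
  obtain ⟨hw0, iw, hiw, hwi, hsw⟩ := WP_elim hw
  obtain ⟨i, hi, huni⟩ := hadj
  have agree : ∀ j, j ≠ i → v j = w j := by
    intro j hj
    by_contra hne
    exact hj (huni j hne)
  have hor : i = iv ∨ i = iw := by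
    by_contra hc
    push_neg at hc
    obtain ⟨h1, h2⟩ := hc
    have e1 : v iv = w iv := agree iv (fun h => h1 h.symm)
    have e2 : v iw = w iw := agree iw (fun h => h2 h.symm)
    have l1 : (iv : ℕ) ≤ ellN w := ell_le (e1 ▸ hvi)
    have l2 : (iw : ℕ) ≤ ellN v := ell_le (e2 ▸ hwi)
    have hvw : iv = iw := Fin.ext (by omega)
    subst hvw
    have hsum : ∑ j, w j = ∑ j, v j + (w i - v i) := sum_shift agree
    rw [hsv, hsw, ← e1] at hsum
    exact hi (by linear_combination hsum)
  have hA : i = iv ∧ i = iw := by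
    rcases hor with h | h
    · exact ⟨h, aux_not hk hiv hvi hsv hiw hwi hsw agree h⟩
    · exact ⟨aux_not hk hiw hwi hsw hiv hvi hsv (fun j hj => (agree j hj).symm) h, h⟩
  obtain ⟨hA1, hA2⟩ := hA
  subst hA1
  refine ⟨i, ?_, agree, ?_, ?_, ?_, ?_⟩
  · exact hiv
  · exact hvi
  · rw [← hA2] at hwi; exact hwi
  · exact Ne.symm hi
  · have hsum : ∑ j, w j = ∑ j, v j + (w i - v i) := sum_shift agree
    rw [hsv, hsw, ← hA2] at hsum
    linear_combination hsum

end wpfacts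

section counting

variable {n k : ℕ}

lemma pow_split (k m : ℕ) (hm : 1 ≤ m) : k ^ m = k * k ^ (m - 1) := by
  have hm' : m = (m - 1) + 1 := by omega
  rw [hm']
  simp [pow_succ, mul_comm]

lemma card_fiber [NeZero k] {m : ℕ} (hm : 1 ≤ m) (c : ZMod k) :
    (Finset.univ.filter (fun u : Fin m → ZMod k => ∑ i, u i = c)).card = k ^ (m - 1) := by
  have hk0 : 0 < k := Nat.pos_of_ne_zero (NeZero.ne k)
  have i0 : Fin m := ⟨0, hm⟩
  have heq : ∀ c₁ c₂ : ZMod k,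
      (Finset.univ.filter (fun u : Fin m → ZMod k => ∑ i, u i = c₁)).card =
      (Finset.univ.filter (fun u : Fin m → ZMod k => ∑ i, u i = c₂)).card := by
    intro c₁ c₂
    have upd_sum : ∀ (u : Fin m → ZMod k) (d : ZMod k),
        ∑ j, Function.update u i0 (u i0 + d) j = (∑ j, u j) + d := by
      intro u d
      have := sum_shift (v := u) (w := Function.update u i0 (u i0 + d)) (i := i0)
        (fun j hj => (Function.update_of_ne hj _ u).symm)
      rw [this, Function.update_self]
      ring
    refine Finset.card_nbij' (fun u => Function.update u i0 (u i0 + (c₂ - c₁)))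
      (fun u => Function.update u i0 (u i0 + (c₁ - c₂))) ?_ ?_ ?_ ?_
    · intro u hu
      rw [Finset.mem_coe, Finset.mem_filter] at hu ⊢
      refine ⟨Finset.mem_univ _, ?_⟩
      rw [upd_sum, hu.2]; ring
    · intro u hu
      rw [Finset.mem_coe, Finset.mem_filter] at hu ⊢
      refine ⟨Finset.mem_univ _, ?_⟩
      rw [upd_sum, hu.2]; ring
    · intro u _
      funext j
      by_cases hj : j = i0
      · subst hj; simp [Function.update_self]; ring
      · simp [Function.update_of_ne hj]
    · intro u _
      funext j
      by_cases hj : j = i0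
      · subst hj; simp [Function.update_self]; ring
      · simp [Function.update_of_ne hj]
  have htot : ∑ c : ZMod k, (Finset.univ.filter
      (fun u : Fin m → ZMod k => ∑ i, u i = c)).card = k ^ m := by
    rw [← Finset.card_eq_sum_card_fiberwise (fun u _ => Finset.mem_univ (∑ i, u i))]
    simp [Fintype.card_fun, ZMod.card]
  have hconst : ∑ c' : ZMod k, (Finset.univ.filter
      (fun u : Fin m → ZMod k => ∑ i, u i = c')).card =
      k * (Finset.univ.filter (fun u : Fin m → ZMod k => ∑ i, u i = c)).card := by
    rw [Finset.sum_congr rfl (fun c' _ => heq c' c)]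
    simp [Finset.sum_const, ZMod.card, mul_comm]
  rw [hconst] at htot
  have hkm : k ^ m = k * k ^ (m - 1) := pow_split k m hm
  rw [hkm] at htot
  exact Nat.eq_of_mul_eq_mul_left hk0 htot

lemma snoc_zero_eq_zero_iff {u : Fin n → ZMod k} :
    (Fin.snoc u (0 : ZMod k) : Fin (n + 1) → ZMod k) = 0 ↔ u = 0 := by
  constructor
  · intro h
    funext j
    have h2 := congrFun h (Fin.castSucc j)
    simpa [Fin.snoc_castSucc] using h2
  · intro h
    subst h
    funext j
    induction j using Fin.lastCases with
    | last => simp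
    | cast j => simp [Fin.snoc_castSucc]

lemma ell_snoc_zero {u : Fin n → ZMod k} :
    ellN (Fin.snoc u (0 : ZMod k) : Fin (n + 1) → ZMod k) = ellN u := by
  apply le_antisymm
  · apply Finset.sup_le
    intro i hi
    rw [Finset.mem_filter] at hi
    induction i using Fin.lastCases with
    | last => simp at hi
    | cast j =>
      have hj : u j ≠ 0 := by simpa [Fin.snoc_castSucc] using hi.2
      simpa using ell_le hj
  · apply Finset.sup_le
    intro j hj
    rw [Finset.mem_filter] at hj
    have h2 : (Fin.snoc u (0 : ZMod k) : Fin (n + 1) → ZMod k) (Fin.castSucc j) ≠ 0 := by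
      simpa [Fin.snoc_castSucc] using hj.2
    simpa using ell_le h2

lemma sum_snoc (u : Fin n → ZMod k) (a : ZMod k) :
    ∑ j, (Fin.snoc u a : Fin (n + 1) → ZMod k) j = (∑ j, u j) + a := by
  rw [Fin.sum_univ_castSucc]
  simp [Fin.snoc_castSucc]

lemma ell_last {v : Fin (n + 1) → ZMod k} (h : v (Fin.last n) ≠ 0) : ellN v = n := by
  apply le_antisymm
  · apply Finset.sup_le
    intro j _
    have := j.isLt
    omega
  · simpa using ell_le h

lemma WP_snoc_zero {u : Fin n → ZMod k} :
    WP (n + 1) k (Fin.snoc u (0 : ZMod k) : Fin (n + 1) → ZMod k) ↔ WP n k u := by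
  constructor
  · rintro ⟨h0, i, hi, hs⟩
    have hu0 : u ≠ 0 := by
      intro h
      exact h0 (snoc_zero_eq_zero_iff.mpr h)
    obtain ⟨i', hi', hui'⟩ := ell_spec hu0
    have he : ellN (Fin.snoc u (0 : ZMod k) : Fin (n + 1) → ZMod k) = ellN u :=
      ell_snoc_zero
    have hieq : i = Fin.castSucc i' := Fin.ext (by simp only [Fin.coe_castSucc]; omega)
    rw [hieq, Fin.snoc_castSucc, sum_snoc, add_zero] at hs
    exact ⟨hu0, i', hi', hs⟩
  · rintro ⟨hu0, i, hi, hs⟩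
    refine ⟨fun h => hu0 (snoc_zero_eq_zero_iff.mp h), Fin.castSucc i, ?_, ?_⟩
    · rw [ell_snoc_zero]; simpa using hi
    · rw [Fin.snoc_castSucc, sum_snoc, add_zero]; exact hs

lemma card_part1 [NeZero k] :
    (Finset.univ.filter
      (fun v : Fin (n + 1) → ZMod k => WP (n + 1) k v ∧ v (Fin.last n) = 0)).card
      = (Finset.univ.filter (fun u : Fin n → ZMod k => WP n k u)).card := by
  refine Finset.card_nbij' (fun v => Fin.init v)
    (fun u => (Fin.snoc u (0 : ZMod k) : Fin (n + 1) → ZMod k)) ?_ ?_ ?_ ?_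
  · intro v hv
    rw [Finset.mem_coe, Finset.mem_filter] at hv ⊢
    refine ⟨Finset.mem_univ _, ?_⟩
    have hself : (Fin.snoc (Fin.init v) (0 : ZMod k) : Fin (n + 1) → ZMod k) = v := by
      rw [← hv.2.2]
      exact Fin.snoc_init_self v
    rw [← WP_snoc_zero, hself]
    exact hv.2.1
  · intro u hu
    rw [Finset.mem_coe, Finset.mem_filter] at hu ⊢
    refine ⟨Finset.mem_univ _, WP_snoc_zero.mpr hu.2, ?_⟩
    simp
  · intro v hv
    rw [Finset.mem_coe, Finset.mem_filter] at hv
    rw [← hv.2.2]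
    exact Fin.snoc_init_self v
  · intro u _
    simp

lemma card_part2a [NeZero k] (hk : 3 ≤ k) (hn : 1 ≤ n) {a : ZMod k} (ha : a ≠ 0) :
    (Finset.univ.filter
      (fun v : Fin (n + 1) → ZMod k => WP (n + 1) k v ∧ v (Fin.last n) = a)).card
      = k ^ (n - 1) := by
  rw [← card_fiber (k := k) hn (sfun k a - a)]
  refine Finset.card_nbij' (fun v => Fin.init v)
    (fun u => (Fin.snoc u a : Fin (n + 1) → ZMod k)) ?_ ?_ ?_ ?_
  · intro v hv
    rw [Finset.mem_coe, Finset.mem_filter] at hv ⊢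
    refine ⟨Finset.mem_univ _, ?_⟩
    obtain ⟨hv0, i, hi, hvi, hs⟩ := WP_elim hv.2.1
    have hell : ellN v = n := ell_last (by rw [hv.2.2]; exact ha)
    have hi' : i = Fin.last n := Fin.ext (by simp only [Fin.val_last]; omega)
    rw [hi', hv.2.2] at hs
    have hsum : ∑ j, v j = (∑ j, Fin.init v j) + a := by
      rw [Fin.sum_univ_castSucc, hv.2.2]
      rfl
    rw [hsum] at hs
    linear_combination hs
  · intro u hu
    rw [Finset.mem_coe, Finset.mem_filter] at hu ⊢
    refine ⟨Finset.mem_univ _, ⟨?_, ?_⟩, ?_⟩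
    · intro h
      have h2 := congrFun h (Fin.last n)
      simp only [Fin.snoc_last] at h2
      exact ha h2
    · refine ⟨Fin.last n, ?_, ?_⟩
      · rw [ell_last (v := (Fin.snoc u a : Fin (n + 1) → ZMod k))
          (by simp only [Fin.snoc_last]; exact ha)]
        exact Fin.val_last n
      · simp only [Fin.snoc_last]
        rw [sum_snoc, hu.2]
        ring
    · simp
  · intro v hv
    rw [Finset.mem_coe, Finset.mem_filter] at hv
    rw [← hv.2.2]
    exact Fin.snoc_init_self v
  · intro u _
    simp

lemma card_WP [NeZero k] (hk : 3 ≤ k) : ∀ n : ℕ, 1 ≤ n →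
    (Finset.univ.filter (fun v : Fin n → ZMod k => WP n k v)).card = k ^ (n - 1) + 1 := by
  intro n hn
  induction n, hn using Nat.le_induction with
  | base =>
    have hone : (Finset.univ.filter (fun v : Fin 1 → ZMod k => WP 1 k v)) =
        {fun _ => (1 : ZMod k), fun _ => (2 : ZMod k)} := by
      ext v
      simp only [Finset.mem_filter, Finset.mem_univ, true_and, Finset.mem_insert,
        Finset.mem_singleton]
      constructor
      · rintro ⟨hv0, i, hi, hs⟩
        have h0 : i = 0 := Subsingleton.elim _ _
        rw [h0, Fin.sum_univ_one] at hs
        rcases sfun_vals (k := k) (v 0) with h | h <;> rw [h] at hs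
        · left; funext j
          have hj : j = 0 := Subsingleton.elim _ _
          rw [hj, hs]
        · right; funext j
          have hj : j = 0 := Subsingleton.elim _ _
          rw [hj, hs]
      · have hell : ∀ w : Fin 1 → ZMod k, ((0 : Fin 1) : ℕ) = ellN w := by
          intro w
          have : ellN w ≤ 0 := by
            apply Finset.sup_le
            intro i _
            have := i.isLt
            omega
          omega
        rintro (h | h) <;> subst h
        · refine ⟨?_, 0, hell _, ?_⟩
          · intro h2
            exact one_ne hk (congrFun h2 0)
          · rw [Fin.sum_univ_one, sfun_one hk]
        · refine ⟨?_, 0, hell _, ?_⟩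
          · intro h2
            exact two_ne hk (congrFun h2 0)
          · rw [Fin.sum_univ_one, sfun_two]
    rw [hone, Finset.card_insert_of_notMem, Finset.card_singleton]
    · norm_num
    · simp only [Finset.mem_singleton]
      intro h
      exact one_ne_two hk (congrFun h 0)
  | succ n hn ih =>
    classical
    have hsplit := Finset.card_filter_add_card_filter_not
      (s := Finset.univ.filter (fun v : Fin (n + 1) → ZMod k => WP (n + 1) k v))
      (p := fun v => v (Fin.last n) = 0)
    rw [Finset.filter_filter, Finset.filter_filter] at hsplit
    have h1 : (Finset.univ.filter
        (fun v : Fin (n + 1) → ZMod k => WP (n + 1) k v ∧ v (Fin.last n) = 0)).card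
        = k ^ (n - 1) + 1 := by
      rw [card_part1]
      exact ih
    have h2 : (Finset.univ.filter
        (fun v : Fin (n + 1) → ZMod k => WP (n + 1) k v ∧ ¬v (Fin.last n) = 0)).card
        = (k - 1) * k ^ (n - 1) := by
      rw [Finset.card_eq_sum_card_fiberwise
        (f := fun v : Fin (n + 1) → ZMod k => v (Fin.last n)) (t := Finset.univ)
        (fun v _ => Finset.mem_univ _)]
      have hterm : ∀ a : ZMod k,
          ((Finset.univ.filter
            (fun v : Fin (n + 1) → ZMod k => WP (n + 1) k v ∧ ¬v (Fin.last n) = 0)).filter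
            (fun v => v (Fin.last n) = a)).card
          = if a = 0 then 0 else k ^ (n - 1) := by
        intro a
        rw [Finset.filter_filter]
        by_cases ha : a = 0
        · subst ha
          rw [if_pos rfl, Finset.card_eq_zero, Finset.filter_eq_empty_iff]
          rintro v -
          rintro ⟨⟨-, hne⟩, h0⟩
          exact hne h0
        · rw [if_neg ha, ← card_part2a hk hn ha]
          congr 1
          apply Finset.filter_congr
          intro v _
          constructor
          · rintro ⟨⟨hw, -⟩, hl⟩
            exact ⟨hw, hl⟩
          · rintro ⟨hw, hl⟩
            exact ⟨⟨hw, by rw [hl]; exact ha⟩, hl⟩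
      rw [Finset.sum_congr rfl (fun a _ => hterm a)]
      rw [Finset.sum_ite, Finset.sum_const, Finset.sum_const]
      have hcard : (Finset.univ.filter (fun a : ZMod k => ¬a = 0)).card = k - 1 := by
        rw [Finset.filter_not, Finset.filter_eq']
        simp only [Finset.mem_univ, if_true]
        rw [Finset.card_sdiff_of_subset (Finset.subset_univ _), Finset.card_singleton,
          Finset.card_univ, ZMod.card]
      rw [hcard]
      simp
    rw [h1, h2] at hsplit
    have hK : k ^ n = k * k ^ (n - 1) := pow_split k n hn
    have hle : k ^ (n - 1) ≤ k * k ^ (n - 1) :=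
      Nat.le_mul_of_pos_left _ (Nat.pos_of_ne_zero (NeZero.ne k))
    rw [Nat.sub_mul, one_mul] at hsplit
    simp only [Nat.add_sub_cancel]
    rw [hK, ← hsplit]
    have h3 : k ^ (n - 1) + (k * k ^ (n - 1) - k ^ (n - 1)) = k * k ^ (n - 1) :=
      Nat.add_sub_cancel' hle
    rw [Nat.add_right_comm, h3]

end counting

end Stmt16

theorem stmt16 (n k : ℕ) (hn : 1 ≤ n) (hk : 3 ≤ k) :
    ∃ W : Set (Fin n → ZMod k), W.ncard = k ^ (n - 1) + 1 ∧
      ∀ v ∈ W, ∀ w₁ ∈ W, ∀ w₂ ∈ W, HAdj v w₁ → HAdj v w₂ → w₁ = w₂ := by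
  haveI : NeZero k := ⟨by omega⟩
  refine ⟨(↑(Finset.univ.filter (fun v : Fin n → ZMod k => Stmt16.WP n k v)) :
      Set (Fin n → ZMod k)), ?_, ?_⟩
  · rw [Set.ncard_coe_finset]
    exact Stmt16.card_WP hk n hn
  · intro v hv w₁ hw₁ w₂ hw₂ ha₁ ha₂
    rw [Finset.mem_coe, Finset.mem_filter] at hv hw₁ hw₂
    obtain ⟨i₁, hi₁, ag₁, hv₁, hw₁0, hne₁, rel₁⟩ := Stmt16.key hk hv.2 hw₁.2 ha₁
    obtain ⟨i₂, hi₂, ag₂, hv₂, hw₂0, hne₂, rel₂⟩ := Stmt16.key hk hv.2 hw₂.2 ha₂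
    have hie : i₁ = i₂ := Fin.ext (by omega)
    subst hie
    have hr : w₁ i₁ = w₂ i₁ := Stmt16.sfun_fiber hk rel₁ rel₂ hne₁ hne₂
    funext j
    by_cases hj : j = i₁
    · rw [hj]; exact hr
    · rw [← ag₁ j hj, ag₂ j hj]
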